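/- Assume the sign-coherence of C-matrices: for every skew-symmetrizable initial integer matrix and every path, the associated C-matrix is column sign-coherent. Let B be a skew-symmetrizable n×n integer matrix with positive diagonal skew-symmetrizer D, and let t be reached from t_0 by a path. Then the principal extension satisfies the 2n×2n block identity B̄_t = [[B_t, −D^{−1}(C^{B;t_0}_t)^T D], [C^{B;t_0}_t, O]]. -/

import Mathlib

open Matrix

section Defs

variable {ι : Type} [Fintype ι] [DecidableEq ι]
variable {R : Type} [CommRing R] [LinearOrder R] [IsStrictOrderedRing R]

/-- Entrywise positive part `[A]₊`. -/
def matPos (A : Matrix ι ι R) : Matrix ι ι R := fun i j => max (A i j) 0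

/-- `A^{k•}`: the matrix keeping only the `k`-th row of `A`. -/
def rowSel (k : ι) (A : Matrix ι ι R) : Matrix ι ι R := fun i j => if i = k then A i j else 0

/-- `A^{•k}`: the matrix keeping only the `k`-th column of `A`. -/
def colSel (k : ι) (A : Matrix ι ι R) : Matrix ι ι R := fun i j => if j = k then A i j else 0

/-- Entrywise maximum of two matrices. -/
def emax (A B : Matrix ι ι R) : Matrix ι ι R := fun i j => max (A i j) (B i j)

/-- `J_ℓ`: identity matrix with `(ℓ,ℓ)` entry replaced by `-1`. -/
def Jmat (ℓ : ι) : Matrix ι ι R := Matrix.diagonal fun i => if i = ℓ then -1 else 1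

/-- Matrix mutation `μ_k(B)` in direction `k`. -/
def mutate (B : Matrix ι ι R) (k : ι) : Matrix ι ι R := fun i j =>
  if i = k ∨ j = k then -(B i j)
  else B i j + max (B i k) 0 * B k j + B i k * max (-(B k j)) 0

/-- The data `(B_t, C_t, G_t, F_t)` attached to a vertex. -/
structure SeedData (ι R : Type) where
  B : Matrix ι ι R
  C : Matrix ι ι R
  G : Matrix ι ι R
  F : Matrix ι ι R

/-- One final-seed mutation step in direction `ℓ` (with initial exchange matrix `B0`). -/
def seedStep (B0 : Matrix ι ι R) (s : SeedData ι R) (ℓ : ι) : SeedData ι R where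
  B := mutate s.B ℓ
  C := s.C * (Jmat ℓ + rowSel ℓ (matPos s.B)) + colSel ℓ (matPos (-s.C)) * s.B
  G := s.G * (Jmat ℓ + colSel ℓ (matPos s.B)) - B0 * colSel ℓ (matPos s.C)
  F := s.F * Jmat ℓ + emax (colSel ℓ (matPos s.C) + s.F * colSel ℓ (matPos s.B))
      (colSel ℓ (matPos (-s.C)) + s.F * colSel ℓ (matPos (-s.B)))

/-- The seed data at the endpoint of the path `p` starting from the initial vertex. -/
def seedOf (B0 : Matrix ι ι R) (p : List ι) : SeedData ι R :=
  p.foldl (seedStep B0) ⟨B0, 1, 1, 0⟩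

/-- The exchange matrix `B_t` at the end of the path `p`. -/
def Bpath (B : Matrix ι ι R) (p : List ι) : Matrix ι ι R := (seedOf B p).B

/-- The `C`-matrix `C^{B;t_0}_t` at the end of the path `p`. -/
def Cmat (B : Matrix ι ι R) (p : List ι) : Matrix ι ι R := (seedOf B p).C

/-- The `G`-matrix `G^{B;t_0}_t` at the end of the path `p`. -/
def Gmat (B : Matrix ι ι R) (p : List ι) : Matrix ι ι R := (seedOf B p).G

/-- The `F`-matrix `F^{B;t_0}_t` at the end of the path `p`. -/
def Fmat (B : Matrix ι ι R) (p : List ι) : Matrix ι ι R := (seedOf B p).F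

/-- `B` is skew-symmetrizable: `DB` is skew-symmetric for some positive diagonal `D`. -/
def IsSkewSymmetrizable (B : Matrix ι ι ℤ) : Prop :=
  ∃ d : ι → ℤ, (∀ i, 0 < d i) ∧ (Matrix.diagonal d * B)ᵀ = -(Matrix.diagonal d * B)

/-- Column sign-coherence: every column is nonzero and has all entries of one sign. -/
def ColSignCoherent (A : Matrix ι ι ℤ) : Prop :=
  ∀ j, (∃ i, A i j ≠ 0) ∧ ((∀ i, 0 ≤ A i j) ∨ (∀ i, A i j ≤ 0))

/-- Row sign-coherence: every row is nonzero and has all entries of one sign. -/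
def RowSignCoherent (A : Matrix ι ι ℤ) : Prop :=
  ∀ i, (∃ j, A i j ≠ 0) ∧ ((∀ j, 0 ≤ A i j) ∨ (∀ j, A i j ≤ 0))

/-- `ε` is the column sign `ε_{•ℓ}(A)` of the (sign-coherent, nonzero) `ℓ`-th column of `A`. -/
def IsColSign (ε : ℤ) (A : Matrix ι ι ℤ) (ℓ : ι) : Prop :=
  (ε = 1 ∨ ε = -1) ∧ (∃ i, A i ℓ ≠ 0) ∧ ∀ i, 0 ≤ ε * A i ℓ

/-- `ε` is the row sign `ε_{k•}(A)` of the (sign-coherent, nonzero) `k`-th row of `A`. -/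
def IsRowSign (ε : ℤ) (A : Matrix ι ι ℤ) (k : ι) : Prop :=
  (ε = 1 ∨ ε = -1) ∧ (∃ j, A k j ≠ 0) ∧ ∀ j, 0 ≤ ε * A k j

/-- Sign-coherence of `C`-matrices: for every skew-symmetrizable initial integer matrix and
every path, the associated `C`-matrix is column sign-coherent. -/
def SignCoherenceOfC : Prop :=
  ∀ (κ : Type) [Fintype κ] [DecidableEq κ], ∀ B : Matrix κ κ ℤ,
    IsSkewSymmetrizable B → ∀ p : List κ, ColSignCoherent (Cmat B p)

/-- The principal extension `B̄ = [[B, -I],[I, O]]` of `B`, on the index type `Fin n ⊕ Fin n`. -/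
def pext {n : ℕ} (B : Matrix (Fin n) (Fin n) ℤ) :
    Matrix (Fin n ⊕ Fin n) (Fin n ⊕ Fin n) ℤ :=
  Matrix.fromBlocks B (-1) 1 0

noncomputable section FPolys

/-- The ambient field of rational functions `ℚ(y_i : i ∈ ι)` (fraction field of `ℤ[y_i]`). -/
abbrev FField (ι : Type) := FractionRing (MvPolynomial ι ℤ)

/-- The variable `y_i` inside the fraction field. -/
def yvar (i : ι) : FField ι := algebraMap (MvPolynomial ι ℤ) (FField ι) (MvPolynomial.X i)

/-- One mutation step for the triple `(B_t, C_t, (F_{j;t})_j)`. -/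
def fpolyStep (s : Matrix ι ι ℤ × Matrix ι ι ℤ × (ι → FField ι)) (ℓ : ι) :
    Matrix ι ι ℤ × Matrix ι ι ℤ × (ι → FField ι) :=
  ⟨mutate s.1 ℓ,
   s.2.1 * (Jmat ℓ + rowSel ℓ (matPos s.1)) + colSel ℓ (matPos (-s.2.1)) * s.1,
   fun j => if j = ℓ then
     (s.2.2 ℓ)⁻¹ *
       ((∏ i, yvar i ^ (max (s.2.1 i ℓ) 0).toNat) * (∏ i, s.2.2 i ^ (max (s.1 i ℓ) 0).toNat)
        + (∏ i, yvar i ^ (max (-(s.2.1 i ℓ)) 0).toNat) *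
            (∏ i, s.2.2 i ^ (max (-(s.1 i ℓ)) 0).toNat))
   else s.2.2 j⟩

/-- The `F`-polynomial `F^{B;t_0}_{j;t}` (as an element of the field of rational functions)
at the end of the path `p`. -/
def Fpoly (B : Matrix ι ι ℤ) (p : List ι) : ι → FField ι :=
  (p.foldl fpolyStep ⟨B, 1, fun _ => 1⟩).2.2

/-- The polynomial representing an element of the fraction field (when it is a polynomial). -/
def polyOf (x : FField ι) : MvPolynomial ι ℤ := by
  classical exact
    if h : ∃ q : MvPolynomial ι ℤ, algebraMap (MvPolynomial ι ℤ) (FField ι) q = x then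
      h.choose else 0

/-- The `H`-matrix `H^{B;t_0}_t`: `h_{ij;t}` is the minimum over exponent vectors `a` in the
support of `F^{B;t_0}_{j;t}` of `-a_i + ∑_{l ≠ i} [-b_{il}]₊ a_l`. -/
def Hmat (B : Matrix ι ι ℤ) (p : List ι) : Matrix ι ι ℤ := fun i j =>
  if h : (polyOf (Fpoly B p j)).support.Nonempty then
    (polyOf (Fpoly B p j)).support.inf' h
      (fun a => -(a i : ℤ) + ∑ l ∈ Finset.univ.erase i, max (-(B i l)) 0 * (a l : ℤ))
  else 0

end FPolys

/-- The embedding `ℚ(y_1,…,y_n) → ℚ(y_1,…,y_{2n})` sending `y_i` to `y_i`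
(the second batch of variables indexed by the right summand). -/
noncomputable def embK (n : ℕ) : FField (Fin n) →+* FField (Fin n ⊕ Fin n) :=
  IsFractionRing.lift
    (g := (algebraMap (MvPolynomial (Fin n ⊕ Fin n) ℤ) (FField (Fin n ⊕ Fin n))).comp
      (MvPolynomial.rename (Sum.inl : Fin n → Fin n ⊕ Fin n)).toRingHom)
    (by
      intro a b hab
      simp only [RingHom.coe_comp, Function.comp_apply, AlgHom.toRingHom_eq_coe,
        RingHom.coe_coe] at hab
      exact MvPolynomial.rename_injective _ Sum.inl_injective
        (IsFractionRing.injective (MvPolynomial (Fin n ⊕ Fin n) ℤ)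
          (FField (Fin n ⊕ Fin n)) hab))

/-- `D⁻¹ Cᵀ D` over `ℚ`, for the positive diagonal skew-symmetrizer `D = diagonal d`. -/
noncomputable def dCd {n : ℕ} (d : Fin n → ℤ) (C : Matrix (Fin n) (Fin n) ℤ) :
    Matrix (Fin n) (Fin n) ℚ :=
  (Matrix.diagonal fun i => (d i : ℚ))⁻¹ * (C.map (Int.cast : ℤ → ℚ))ᵀ *
    Matrix.diagonal fun i => (d i : ℚ)

end Defs

section Aux

variable {ι : Type} [Fintype ι] [DecidableEq ι]

lemma seedOf_concat {R : Type} [CommRing R] [LinearOrder R] [IsStrictOrderedRing R] (B : Matrix ι ι R) (p : List ι) (ℓ : ι) :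
    seedOf B (p ++ [ℓ]) = seedStep B (seedOf B p) ℓ := by
  simp [seedOf, List.foldl_append]

lemma Bpath_concat {R : Type} [CommRing R] [LinearOrder R] [IsStrictOrderedRing R] (B : Matrix ι ι R) (p : List ι) (ℓ : ι) :
    Bpath B (p ++ [ℓ]) = mutate (Bpath B p) ℓ := by
  simp [Bpath, seedOf_concat, seedStep]

lemma Cmat_concat {R : Type} [CommRing R] [LinearOrder R] [IsStrictOrderedRing R] (B : Matrix ι ι R) (p : List ι) (ℓ : ι) :
    Cmat B (p ++ [ℓ]) =
      Cmat B p * (Jmat ℓ + rowSel ℓ (matPos (Bpath B p)))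
        + colSel ℓ (matPos (-(Cmat B p))) * Bpath B p := by
  simp [Cmat, Bpath, seedOf_concat, seedStep]

lemma Bpath_nil {R : Type} [CommRing R] [LinearOrder R] [IsStrictOrderedRing R] (B : Matrix ι ι R) : Bpath B [] = B := rfl

lemma Cmat_nil {R : Type} [CommRing R] [LinearOrder R] [IsStrictOrderedRing R] (B : Matrix ι ι R) : Cmat B [] = 1 := rfl

lemma Cstep_apply {R : Type} [CommRing R] [LinearOrder R] [IsStrictOrderedRing R] (Bm C : Matrix ι ι R) (ℓ i j : ι) :
    ((C * (Jmat ℓ + rowSel ℓ (matPos Bm)) + colSel ℓ (matPos (-C)) * Bm) : Matrix ι ι R) i j =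
      C i j * (if j = ℓ then -1 else 1) + C i ℓ * max (Bm ℓ j) 0
        + max (-(C i ℓ)) 0 * Bm ℓ j := by
  classical
  rw [Matrix.add_apply, Matrix.mul_add, Matrix.add_apply, Jmat, Matrix.mul_diagonal,
    Matrix.mul_apply, Matrix.mul_apply]
  simp only [rowSel, colSel, matPos, Matrix.neg_apply, mul_ite, mul_zero, ite_mul, zero_mul,
    Finset.sum_ite_eq', Finset.mem_univ, if_true]
  try ring

lemma map_mutate (M : Matrix ι ι ℤ) (k : ι) :
    (mutate M k).map ((↑) : ℤ → ℚ) = mutate (M.map ((↑) : ℤ → ℚ)) k := by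
  ext i j
  by_cases h : i = k ∨ j = k
  · simp [mutate, Matrix.map_apply, h]
  · simp only [mutate, Matrix.map_apply, h, if_false]
    push_cast
    ring

lemma dCd_apply {n : ℕ} (d : Fin n → ℤ) (hd : ∀ i, (d i : ℚ) ≠ 0)
    (C : Matrix (Fin n) (Fin n) ℤ) (i j : Fin n) :
    dCd d C i j = ((d i : ℚ))⁻¹ * ((C j i : ℤ) : ℚ) * (d j : ℚ) := by
  have hinv : (Matrix.diagonal fun i => (d i : ℚ))⁻¹
      = Matrix.diagonal (fun i => ((d i : ℚ))⁻¹) := by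
    refine Matrix.inv_eq_right_inv ?_
    rw [Matrix.diagonal_mul_diagonal]
    convert Matrix.diagonal_one with k
    exact mul_inv_cancel₀ (hd k)
  rw [dCd, hinv, Matrix.mul_diagonal, Matrix.diagonal_mul, Matrix.transpose_apply,
    Matrix.map_apply]

lemma key_skew (dk di dj a x b y : ℤ) (hdk : 0 < dk) (_hdi : 0 < di) (_hdj : 0 < dj)
    (h1 : di * a = -(dk * x)) (h2 : dj * b = -(dk * y)) :
    di * (max a 0 * y + a * max (-y) 0) = -(dj * (max b 0 * x + b * max (-x) 0)) := by
  rcases le_total a 0 with ha | ha <;> rcases le_total b 0 with hb | hb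
  · have hx : 0 ≤ x := le_of_mul_le_mul_left (by nlinarith) hdk
    have hy : 0 ≤ y := le_of_mul_le_mul_left (by nlinarith) hdk
    rw [max_eq_right ha, max_eq_right hb, max_eq_right (by linarith : -y ≤ 0),
      max_eq_right (by linarith : -x ≤ 0)]
    ring
  · have hx : 0 ≤ x := le_of_mul_le_mul_left (by nlinarith) hdk
    have hy : y ≤ 0 := le_of_mul_le_mul_left (by nlinarith) hdk
    rw [max_eq_right ha, max_eq_left hb, max_eq_left (by linarith : 0 ≤ -y),
      max_eq_right (by linarith : -x ≤ 0)]
    linear_combination (-y) * h1 + x * h2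
  · have hx : x ≤ 0 := le_of_mul_le_mul_left (by nlinarith) hdk
    have hy : 0 ≤ y := le_of_mul_le_mul_left (by nlinarith) hdk
    rw [max_eq_left ha, max_eq_right hb, max_eq_right (by linarith : -y ≤ 0),
      max_eq_left (by linarith : 0 ≤ -x)]
    linear_combination y * h1 - x * h2
  · have hx : x ≤ 0 := le_of_mul_le_mul_left (by nlinarith) hdk
    have hy : y ≤ 0 := le_of_mul_le_mul_left (by nlinarith) hdk
    rw [max_eq_left ha, max_eq_left hb, max_eq_left (by linarith : 0 ≤ -y),
      max_eq_left (by linarith : 0 ≤ -x)]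
    ring

lemma skew_mutate (d : ι → ℤ) (hd : ∀ i, 0 < d i) (M : Matrix ι ι ℤ)
    (h : ∀ i j, d i * M i j = -(d j * M j i)) (k : ι) :
    ∀ i j, d i * (mutate M k) i j = -(d j * (mutate M k) j i) := by
  intro i j
  simp only [mutate]
  by_cases hcond : i = k ∨ j = k
  · rw [if_pos hcond, if_pos (hcond.elim Or.inr Or.inl)]
    linarith [h i j]
  · push_neg at hcond
    rw [if_neg (by tauto), if_neg (by tauto)]
    have := key_skew (d k) (d i) (d j) (M i k) (M k i) (M j k) (M k j)
      (hd k) (hd i) (hd j) (h i k) (h j k)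
    have hij := h i j
    nlinarith [this, hij]

lemma skew_Bpath (d : ι → ℤ) (hd : ∀ i, 0 < d i) (B : Matrix ι ι ℤ)
    (h : ∀ i j, d i * B i j = -(d j * B j i)) (p : List ι) :
    ∀ i j, d i * (Bpath B p) i j = -(d j * (Bpath B p) j i) := by
  induction p using List.reverseRecOn with
  | nil => exact h
  | append_singleton p ℓ ih =>
    rw [Bpath_concat]
    exact skew_mutate d hd _ ih ℓ

lemma key_tr (di dl dj b b2 cji cjl : ℚ) (hdi : 0 < di) (hdl : 0 < dl) (hdj : 0 < dj)
    (hb : di * b = -(dl * b2)) :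
    -(di⁻¹ * cji * dj) + max b 0 * (-(dl⁻¹ * cjl * dj)) + b * max (dl⁻¹ * cjl * dj) 0
      = -(di⁻¹ * (cji + cjl * max b2 0 + max (-cjl) 0 * b2) * dj) := by
  have hb2' : b2 = -(di * b) / dl := by
    rw [eq_div_iff hdl.ne']
    linarith
  have hXpos : 0 ≤ cjl → 0 ≤ dl⁻¹ * cjl * dj := fun hc =>
    mul_nonneg (mul_nonneg (inv_pos.mpr hdl).le hc) hdj.le
  have hXneg : cjl ≤ 0 → dl⁻¹ * cjl * dj ≤ 0 := fun hc => by
    nlinarith [mul_pos (inv_pos.mpr hdl) hdj]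
  rcases le_total b 0 with hbs | hbs <;> rcases le_total cjl 0 with hc | hc
  · have hb2 : 0 ≤ b2 := le_of_mul_le_mul_left (by nlinarith : dl * 0 ≤ dl * b2) hdl
    rw [max_eq_right hbs, max_eq_left hb2, max_eq_left (by linarith : (0:ℚ) ≤ -cjl),
      max_eq_right (hXneg hc), hb2']
    first
    | (field_simp; ring)
    | field_simp
  · have hb2 : 0 ≤ b2 := le_of_mul_le_mul_left (by nlinarith : dl * 0 ≤ dl * b2) hdl
    rw [max_eq_right hbs, max_eq_left hb2, max_eq_right (by linarith : -cjl ≤ (0:ℚ)),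
      max_eq_left (hXpos hc), hb2']
    first
    | (field_simp; ring)
    | field_simp
  · have hb2 : b2 ≤ 0 := le_of_mul_le_mul_left (by nlinarith : dl * b2 ≤ dl * 0) hdl
    rw [max_eq_left hbs, max_eq_right hb2, max_eq_left (by linarith : (0:ℚ) ≤ -cjl),
      max_eq_right (hXneg hc), hb2']
    first
    | (field_simp; ring)
    | field_simp
  · have hb2 : b2 ≤ 0 := le_of_mul_le_mul_left (by nlinarith : dl * b2 ≤ dl * 0) hdl
    rw [max_eq_left hbs, max_eq_right hb2, max_eq_right (by linarith : -cjl ≤ (0:ℚ)),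
      max_eq_left (hXpos hc), hb2']
    first
    | (field_simp; ring)
    | field_simp

lemma key_bl {R : Type} [CommRing R] [LinearOrder R] [IsStrictOrderedRing R] (c x : R) :
    max c 0 * x + c * max (-x) 0 = c * max x 0 + max (-c) 0 * x := by
  have h1 : max x 0 = x + max (-x) 0 := by
    rcases le_total x 0 with h | h
    · rw [max_eq_right h, max_eq_left (by linarith)]; ring
    · rw [max_eq_left h, max_eq_right (by linarith)]; ring
  have h2 : max c 0 = c + max (-c) 0 := by
    rcases le_total c 0 with h | h
    · rw [max_eq_right h, max_eq_left (by linarith)]; ring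
    · rw [max_eq_left h, max_eq_right (by linarith)]; ring
  rw [h1, h2]; ring

lemma key_br (c1 c2 dl dj : ℚ) (hdl : 0 < dl) (hdj : 0 < dj)
    (hsc : (0 ≤ c1 ∧ 0 ≤ c2) ∨ (c1 ≤ 0 ∧ c2 ≤ 0)) :
    max c1 0 * (-(dl⁻¹ * c2 * dj)) + c1 * max (dl⁻¹ * c2 * dj) 0 = 0 := by
  rcases hsc with ⟨h1, h2⟩ | ⟨h1, h2⟩
  · have hX : 0 ≤ dl⁻¹ * c2 * dj := mul_nonneg (mul_nonneg (inv_pos.mpr hdl).le h2) hdj.le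
    rw [max_eq_left h1, max_eq_left hX]; ring
  · have hX : dl⁻¹ * c2 * dj ≤ 0 := by nlinarith [mul_pos (inv_pos.mpr hdl) hdj]
    rw [max_eq_right h1, max_eq_right hX]; ring

end Aux

/-- block form of the mutated principal extension (with sign-coherence). -/
theorem pext_Bpath_block_of_signCoherence (hsc : SignCoherenceOfC) {n : ℕ}
    (B : Matrix (Fin n) (Fin n) ℤ) (d : Fin n → ℤ) (hd : ∀ i, 0 < d i)
    (hskew : (Matrix.diagonal d * B)ᵀ = -(Matrix.diagonal d * B)) (p : List (Fin n)) :
    (Bpath (pext B) (p.map Sum.inl)).map ((↑) : ℤ → ℚ) =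
      Matrix.fromBlocks ((Bpath B p).map ((↑) : ℤ → ℚ)) (-dCd d (Cmat B p))
        ((Cmat B p).map ((↑) : ℤ → ℚ)) 0 := by
  classical
  have hdq : ∀ i, (0 : ℚ) < (d i : ℚ) := fun i => by exact_mod_cast hd i
  have hdq' : ∀ i, ((d i : ℚ)) ≠ 0 := fun i => (hdq i).ne'
  have hskew' : ∀ i j, d i * B i j = -(d j * B j i) := by
    intro i j
    have h := congrFun (congrFun hskew i) j
    simp only [Matrix.transpose_apply, Matrix.diagonal_mul, Matrix.neg_apply] at h
    linarith
  have hskP : ∀ (q : List (Fin n)) i j,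
      d i * (Bpath B q) i j = -(d j * (Bpath B q) j i) :=
    fun q => skew_Bpath d hd B hskew' q
  have hBll : ∀ (q : List (Fin n)) ℓ, Bpath B q ℓ ℓ = 0 := by
    intro q ℓ
    have h := hskP q ℓ ℓ
    have h2 : d ℓ * Bpath B q ℓ ℓ = 0 := by linarith
    rcases mul_eq_zero.mp h2 with h3 | h3
    · exact absurd h3 (hd ℓ).ne'
    · exact h3
  have hsgn : ∀ (q : List (Fin n)) ℓ,
      (∀ i, 0 ≤ Cmat B q i ℓ) ∨ (∀ i, Cmat B q i ℓ ≤ 0) :=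
    fun q ℓ => (hsc (Fin n) B ⟨d, hd, hskew⟩ q ℓ).2
  induction p using List.reverseRecOn with
  | nil =>
    simp only [List.map_nil, Bpath_nil, Cmat_nil]
    ext i j
    obtain i | i := i <;> obtain j | j := j
    · simp [pext, Matrix.map_apply]
    · simp only [pext, Matrix.map_apply, Matrix.fromBlocks_apply₁₂, Matrix.neg_apply,
        dCd_apply d hdq', Matrix.one_apply]
      by_cases hij : i = j
      · subst hij
        simp only [if_pos rfl]
        push_cast
        rw [mul_one, inv_mul_cancel₀ (hdq' i)]
      · rw [if_neg hij, if_neg (Ne.symm hij)]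
        push_cast
        try ring
    · simp [pext, Matrix.map_apply, Matrix.one_apply]
    · simp [pext, Matrix.map_apply]
  | append_singleton p ℓ ih =>
    have hBll' : Bpath B p ℓ ℓ = 0 := hBll p ℓ
    simp only [List.map_append, List.map_cons, List.map_nil]
    rw [Bpath_concat (pext B) (p.map Sum.inl) (Sum.inl ℓ), map_mutate, ih,
      Bpath_concat B p ℓ, map_mutate, Cmat_concat B p ℓ]
    ext i j
    obtain i | i := i <;> obtain j | j := j
    · -- top-left block
      simp only [mutate, Matrix.fromBlocks_apply₁₁, Matrix.fromBlocks_apply₁₂,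
        Matrix.fromBlocks_apply₂₁, Sum.inl.injEq, reduceCtorEq, or_false, false_or,
        Matrix.map_apply]
    · -- top-right block
      by_cases hi : i = ℓ
      · subst hi
        simp only [mutate, Sum.inl.injEq, reduceCtorEq, or_false, if_pos rfl,
          Matrix.fromBlocks_apply₁₂, Matrix.neg_apply, dCd_apply d hdq',
          Cstep_apply, hBll', if_pos rfl, Matrix.map_apply]
        push_cast
        rw [max_self]
        ring
      · simp only [mutate, Sum.inl.injEq, reduceCtorEq, or_false, if_neg hi,
          Matrix.fromBlocks_apply₁₂, Matrix.fromBlocks_apply₁₁, Matrix.neg_apply,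
          dCd_apply d hdq', Cstep_apply, if_neg hi, Matrix.map_apply, neg_neg]
        have hb : ((d i : ℚ)) * ((Bpath B p i ℓ : ℤ) : ℚ)
            = -(((d ℓ : ℚ)) * ((Bpath B p ℓ i : ℤ) : ℚ)) := by
          exact_mod_cast hskP p i ℓ
        have hkey := key_tr ((d i : ℚ)) ((d ℓ : ℚ)) ((d j : ℚ))
          ((Bpath B p i ℓ : ℤ) : ℚ) ((Bpath B p ℓ i : ℤ) : ℚ)
          ((Cmat B p j i : ℤ) : ℚ) ((Cmat B p j ℓ : ℤ) : ℚ)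
          (hdq i) (hdq ℓ) (hdq j) hb
        push_cast
        linear_combination hkey
    · -- bottom-left block
      by_cases hj : j = ℓ
      · subst hj
        simp only [mutate, Sum.inl.injEq, reduceCtorEq, false_or, if_pos rfl,
          Matrix.fromBlocks_apply₂₁, Cstep_apply, hBll', if_pos rfl, Matrix.map_apply]
        push_cast
        rw [max_self]
        ring
      · simp only [mutate, Sum.inl.injEq, reduceCtorEq, false_or, if_neg hj,
          Matrix.fromBlocks_apply₂₁, Matrix.fromBlocks_apply₁₁, Cstep_apply,
          if_neg hj, Matrix.map_apply]
        have hkey := key_bl ((Cmat B p i ℓ : ℤ) : ℚ) ((Bpath B p ℓ j : ℤ) : ℚ)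
        push_cast
        linear_combination hkey
    · -- bottom-right block
      simp only [mutate, reduceCtorEq, or_self, if_false, Matrix.fromBlocks_apply₂₂,
        Matrix.fromBlocks_apply₂₁, Matrix.fromBlocks_apply₁₂, Matrix.zero_apply,
        Matrix.neg_apply, dCd_apply d hdq', Matrix.map_apply, neg_neg]
      have hkey := key_br ((Cmat B p i ℓ : ℤ) : ℚ) ((Cmat B p j ℓ : ℤ) : ℚ)
        ((d ℓ : ℚ)) ((d j : ℚ)) (hdq ℓ) (hdq j) ?_
      · push_cast
        linear_combination hkey
      · rcases hsgn p ℓ with h | h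
        · exact Or.inl ⟨by exact_mod_cast h i, by exact_mod_cast h j⟩
        · exact Or.inr ⟨by exact_mod_cast h i, by exact_mod_cast h j⟩
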